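/- Let m ≥ 2 and let k = (k_0, k_1, ...) be positive integers with m coprime to (k_0-1)! and to k_j! for every j ≥ 1. Then for every N ≥ 0, the following identity holds in (ZMod m)⟦q⟧: ∑_{i=0}^{N} ∏_{j=0}^{i} (G_{m^j}^{k_j} - 1) = (∑_{ℓ_0=1}^{m} C(k_0-1+ℓ_0, k_0-1) q^{ℓ_0}) · ∑_{i=0}^{N} G_{m^{i+1}} · ∏_{j=1}^{i} (∑_{ℓ_j=0}^{m-1} (C(k_j+ℓ_j, k_j) - 1) q^{ℓ_j m^j}). (This is the finite form of the expansion C_m^{(k)}(q) ≡ 1 + (∑_{ℓ_0=1}^{m} C(k_0-1+ℓ_0,k_0-1) q^{ℓ_0}) ∑_{i=0}^{∞} (1-q^{m^{i+1}})^{-1} ∏_{j=1}^{i} (∑_{ℓ_j=0}^{m-1} (C(k_j+ℓ_j,k_j)-1) q^{ℓ_j m^j}) (mod m) for the generating function C_m^{(k)}(q) = 1 + ∑_{i=0}^{∞} ∏_{j=0}^{i} ((1-q^{m^j})^{-k_j} - 1) of k-coloured m-ary partitions without gaps.) -/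

import Mathlib

open PowerSeries Finset

lemma my_cast_choose_mul (m J a : ℕ) :
    ((a.choose J : ℕ) : ZMod m) * ((J.factorial : ℕ) : ZMod m) = ((a.descFactorial J : ℕ) : ZMod m) := by
  rw [← Nat.cast_mul, Nat.descFactorial_eq_factorial_mul_choose, Nat.mul_comm]

/-- `C(J+m, J) ≡ 1 (mod m)` when `gcd(m, J!) = 1`. -/
lemma my_B1 (m J : ℕ) (hJ : Nat.Coprime m J.factorial) :
    (((J + m).choose J : ℕ) : ZMod m) = 1 := by
  have hu : IsUnit ((J.factorial : ℕ) : ZMod m) :=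
    (ZMod.isUnit_iff_coprime _ _).2 (Nat.coprime_comm.1 hJ)
  refine hu.mul_right_cancel ?_
  rw [my_cast_choose_mul, one_mul, Nat.descFactorial_eq_prod_range, Nat.cast_prod]
  have h2 : ((J.factorial : ℕ) : ZMod m) = ((J.descFactorial J : ℕ) : ZMod m) := by
    rw [Nat.descFactorial_self]
  rw [h2, Nat.descFactorial_eq_prod_range, Nat.cast_prod]
  apply Finset.prod_congr rfl
  intro i hi
  rw [Finset.mem_range] at hi
  rw [Nat.cast_sub (by omega), Nat.cast_sub (by omega)]
  push_cast
  rw [ZMod.natCast_self]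
  ring

/-- `C(K+m, K+1) ≡ 0 (mod m)` when `gcd(m, (K+1)!) = 1`. -/
lemma my_B2 (m K : ℕ) (hK : Nat.Coprime m (K+1).factorial) :
    (((K + m).choose (K+1) : ℕ) : ZMod m) = 0 := by
  have hu : IsUnit (((K+1).factorial : ℕ) : ZMod m) :=
    (ZMod.isUnit_iff_coprime _ _).2 (Nat.coprime_comm.1 hK)
  refine hu.mul_right_cancel ?_
  rw [my_cast_choose_mul, zero_mul, ZMod.natCast_eq_zero_iff,
    Nat.descFactorial_eq_prod_range]
  have h := Finset.dvd_prod_of_mem (fun i => K + m - i)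
    (Finset.mem_range.mpr (Nat.lt_succ_self K))
  simpa using h

/-- telescoping identity -/
lemma my_telescope (m K : ℕ) (Y : PowerSeries (ZMod m)) (n : ℕ) :
    (1 - Y) * ∑ ℓ ∈ range n, (PowerSeries.C (R := ZMod m)) (((K+1+ℓ).choose (K+1) : ℕ) : ZMod m) * Y ^ ℓ
      = (∑ ℓ ∈ range n, (PowerSeries.C (R := ZMod m)) (((K+ℓ).choose K : ℕ) : ZMod m) * Y ^ ℓ)
        - (PowerSeries.C (R := ZMod m)) (((K+n).choose (K+1) : ℕ) : ZMod m) * Y ^ n := by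
  induction n with
  | zero => simp [Nat.choose_eq_zero_of_lt (Nat.lt_succ_self K)]
  | succ n ih =>
    rw [sum_range_succ, sum_range_succ, mul_add, ih]
    have pas : (K+1+n).choose (K+1) = (K+n).choose K + (K+n).choose (K+1) := by
      rw [show K+1+n = (K+n)+1 by omega]
      exact Nat.choose_succ_succ' (K+n) K
    have hn : (PowerSeries.C (R := ZMod m)) (((K+1+n).choose (K+1) : ℕ) : ZMod m)
        = (PowerSeries.C (R := ZMod m)) (((K+n).choose K : ℕ) : ZMod m)
          + (PowerSeries.C (R := ZMod m)) (((K+n).choose (K+1) : ℕ) : ZMod m) := by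
      rw [← map_add, ← Nat.cast_add, ← pas]
    have hn2 : (PowerSeries.C (R := ZMod m)) (((K+n+1).choose (K+1) : ℕ) : ZMod m)
        = (PowerSeries.C (R := ZMod m)) (((K+1+n).choose (K+1) : ℕ) : ZMod m) := by
      rw [show K+1+n = K+n+1 by omega]
    rw [show K+(n+1) = K+1+n from by omega, hn]
    ring

/-- main power series lemma: `G r ^ (K+1) = G (r*m) * ∑_{ℓ<m} C(K+ℓ,K) X^{ℓr}`. -/
lemma my_main (m : ℕ) (hm : 2 ≤ m) (G : ℕ → PowerSeries (ZMod m))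
    (hG : ∀ r, 1 ≤ r → (1 - X ^ r) * G r = 1) (r : ℕ) (hr : 1 ≤ r) (K : ℕ)
    (hK : Nat.Coprime m K.factorial) :
    G r ^ (K + 1)
      = G (r * m) * ∑ ℓ ∈ range m,
          (PowerSeries.C (R := ZMod m)) (((K + ℓ).choose K : ℕ) : ZMod m) * (X : PowerSeries (ZMod m)) ^ (ℓ * r) := by
  have hrm : 1 ≤ r * m := Nat.one_le_iff_ne_zero.2 (by positivity)
  have cancel : ∀ A B : PowerSeries (ZMod m),
      (1 - X ^ r) * A = (1 - X ^ r) * B → A = B := by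
    intro A B h
    calc A = ((1 - X ^ r) * G r) * A := by rw [hG r hr, one_mul]
    _ = G r * ((1 - X ^ r) * A) := by ring
    _ = G r * ((1 - X ^ r) * B) := by rw [h]
    _ = ((1 - X ^ r) * G r) * B := by ring
    _ = B := by rw [hG r hr, one_mul]
  have hexp : ∀ ℓ : ℕ, (X : PowerSeries (ZMod m)) ^ (ℓ * r) = (X ^ r) ^ ℓ := by
    intro ℓ; rw [← pow_mul, Nat.mul_comm]
  have hgeo : (1 - X ^ r) * ∑ ℓ ∈ range m, ((X : PowerSeries (ZMod m)) ^ r) ^ ℓ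
      = 1 - X ^ (r * m) := by
    have h := geom_sum_mul ((X : PowerSeries (ZMod m)) ^ r) m
    rw [show (X : PowerSeries (ZMod m)) ^ (r*m) = (X ^ r) ^ m from pow_mul X r m]
    linear_combination -h
  induction K with
  | zero =>
    apply cancel
    simp only [pow_one, Nat.zero_add, Nat.choose_zero_right, Nat.cast_one, map_one, one_mul, hexp]
    rw [hG r hr]
    have hre : (1 - X^r) * (G (r*m) * ∑ ℓ ∈ range m, ((X : PowerSeries (ZMod m))^r)^ℓ)
        = G (r*m) * ((1-X^r) * ∑ ℓ ∈ range m, ((X:PowerSeries (ZMod m))^r)^ℓ) := by ring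
    rw [hre, hgeo, mul_comm]
    exact (hG _ hrm).symm
  | succ K ih =>
    have hK' : Nat.Coprime m K.factorial :=
      Nat.Coprime.coprime_dvd_right (Nat.factorial_dvd_factorial (Nat.le_succ K)) hK
    apply cancel
    have lhs : (1 - X ^ r) * G r ^ (K + 1 + 1) = G r ^ (K + 1) := by
      have h := hG r hr
      linear_combination (G r ^ (K+1)) * h
    rw [lhs, ih hK']
    simp only [hexp]
    rw [show (1 - X^r) * (G (r*m) * ∑ ℓ ∈ range m,
        (PowerSeries.C (R := ZMod m)) (((K+1+ℓ).choose (K+1) : ℕ) : ZMod m) * ((X:PowerSeries (ZMod m))^r)^ℓ)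
      = G (r*m) * ((1 - X^r) * ∑ ℓ ∈ range m,
        (PowerSeries.C (R := ZMod m)) (((K+1+ℓ).choose (K+1) : ℕ) : ZMod m) * ((X:PowerSeries (ZMod m))^r)^ℓ) from by ring]
    rw [my_telescope m K (X^r) m, my_B2 m K hK]
    simp

/-- per-term expansion -/
lemma my_term (m : ℕ) (hm : 2 ≤ m) (k : ℕ → ℕ) (hk : ∀ j, 0 < k j)
    (h0 : Nat.Coprime m (Nat.factorial (k 0 - 1)))
    (hj : ∀ j, 1 ≤ j → Nat.Coprime m (Nat.factorial (k j)))
    (G : ℕ → PowerSeries (ZMod m)) (hG : ∀ r, 1 ≤ r → (1 - X ^ r) * G r = 1) (i : ℕ) :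
    ∏ j ∈ range (i + 1), ((G (m ^ j)) ^ k j - 1)
      = (∑ ℓ ∈ Icc 1 m, (PowerSeries.C (R := ZMod m)) ((k 0 - 1 + ℓ).choose (k 0 - 1) : ZMod m) * X ^ ℓ)
        * (G (m ^ (i + 1))
            * ∏ j ∈ Icc 1 i, ∑ ℓ ∈ range m,
                (PowerSeries.C (R := ZMod m)) (((k j + ℓ).choose (k j) : ZMod m) - 1) * X ^ (ℓ * m ^ j)) := by
  induction i with
  | zero =>
    have hk0 : k 0 - 1 + 1 = k 0 := Nat.succ_pred_eq_of_pos (hk 0)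
    have key := my_main m hm G hG 1 (le_refl 1) (k 0 - 1) h0
    rw [hk0] at key
    simp only [one_mul, mul_one] at key
    rw [prod_range_one, pow_zero, key]
    rw [show (Icc 1 0 : Finset ℕ) = ∅ from Finset.Icc_eq_empty (by omega), prod_empty, mul_one]
    have hGm : G m * (1 - X ^ m) = 1 := by rw [mul_comm]; exact hG m (by omega)
    have hins : range (m + 1) = insert 0 (Icc 1 m) := by
      ext x; simp [Nat.lt_succ_iff]; omega
    have e1 : (∑ ℓ ∈ range m, (PowerSeries.C (R := ZMod m)) ((k 0 - 1 + ℓ).choose (k 0 - 1) : ZMod m) * X ^ ℓ)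
          + (X : PowerSeries (ZMod m)) ^ m
        = 1 + ∑ ℓ ∈ Icc 1 m, (PowerSeries.C (R := ZMod m)) ((k 0 - 1 + ℓ).choose (k 0 - 1) : ZMod m) * X ^ ℓ := by
      have e2 := Finset.sum_range_succ
        (fun ℓ => (PowerSeries.C (R := ZMod m)) ((k 0 - 1 + ℓ).choose (k 0 - 1) : ZMod m) * X ^ ℓ) m
      rw [hins, Finset.sum_insert (by simp)] at e2
      have cm : (((k 0 - 1 + m).choose (k 0 - 1) : ℕ) : ZMod m) = 1 := my_B1 m (k 0 - 1) h0
      rw [cm] at e2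
      simp only [Nat.add_zero, Nat.choose_self, Nat.cast_one, map_one, one_mul, pow_zero] at e2
      linear_combination -e2
    rw [show m ^ (0 + 1) = m by ring]
    linear_combination (G m) * e1 + hGm
  | succ i ih =>
    rw [prod_range_succ, ih, Finset.prod_Icc_succ_top (by omega)]
    have hr : 1 ≤ m ^ (i + 1) := Nat.one_le_pow _ _ (by omega)
    have h1 := my_main m hm G hG (m ^ (i + 1)) hr (k (i + 1)) (hj (i + 1) (by omega))
    have h2 := my_main m hm G hG (m ^ (i + 1)) hr 0
      (by simp [Nat.factorial_zero, Nat.coprime_one_right m])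
    simp only [pow_one, Nat.zero_add, Nat.choose_zero_right, Nat.cast_one, map_one, one_mul] at h2
    have hrm : m ^ (i + 1) * m = m ^ (i + 1 + 1) := (pow_succ m (i + 1)).symm
    rw [hrm] at h1 h2
    have hsub : (∑ ℓ ∈ range m,
          (PowerSeries.C (R := ZMod m)) (((k (i + 1) + ℓ).choose (k (i + 1)) : ZMod m) - 1)
            * (X : PowerSeries (ZMod m)) ^ (ℓ * m ^ (i + 1)))
        = (∑ ℓ ∈ range m,
            (PowerSeries.C (R := ZMod m)) (((k (i + 1) + ℓ).choose (k (i + 1)) : ℕ) : ZMod m)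
              * (X : PowerSeries (ZMod m)) ^ (ℓ * m ^ (i + 1)))
          - ∑ ℓ ∈ range m, (X : PowerSeries (ZMod m)) ^ (ℓ * m ^ (i + 1)) := by
      rw [← Finset.sum_sub_distrib]
      exact Finset.sum_congr rfl fun ℓ _ => by rw [map_sub, map_one, sub_mul, one_mul]
    have step : G (m ^ (i + 1)) * (G (m ^ (i + 1)) ^ k (i + 1) - 1)
        = G (m ^ (i + 1 + 1)) * ∑ ℓ ∈ range m,
            (PowerSeries.C (R := ZMod m)) (((k (i + 1) + ℓ).choose (k (i + 1)) : ZMod m) - 1)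
              * (X : PowerSeries (ZMod m)) ^ (ℓ * m ^ (i + 1)) := by
      rw [hsub]
      linear_combination h1 - h2
    have rearr : ∀ (A Q g gk1 g' B : PowerSeries (ZMod m)), g * gk1 = g' * B →
        A * (g * Q) * gk1 = A * (g' * (Q * B)) := by
      intro A Q g gk1 g' B h
      linear_combination (A * Q) * h
    exact rearr _ _ _ _ _ _ step

/-- **Theorem 4 of the paper, finite form.**
Let `m ≥ 2` and `k₀, k₁, …` be positive integers with `m` coprime to `(k₀-1)!` and to
`k_j!` for `j ≥ 1`, and let `G r` denote the inverse of `1 - q^r` in `(ZMod m)⟦q⟧`.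
Then for every `N ≥ 0`, in `(ZMod m)⟦q⟧` we have
`∑_{i=0}^{N} ∏_{j=0}^{i} (G_{m^j}^{k_j} - 1)
  = (∑_{ℓ₀=1}^{m} C(k₀-1+ℓ₀, k₀-1) q^{ℓ₀})
    · ∑_{i=0}^{N} G_{m^{i+1}} · ∏_{j=1}^{i} (∑_{ℓ=0}^{m-1} (C(k_j+ℓ, k_j) - 1) q^{ℓ m^j})`. -/
theorem gapfree_genfun_expansion_mod (m : ℕ) (hm : 2 ≤ m) (k : ℕ → ℕ) (hk : ∀ j, 0 < k j)
    (h0 : Nat.Coprime m (Nat.factorial (k 0 - 1)))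
    (hj : ∀ j, 1 ≤ j → Nat.Coprime m (Nat.factorial (k j)))
    (G : ℕ → PowerSeries (ZMod m)) (hG : ∀ r, 1 ≤ r → (1 - X ^ r) * G r = 1) (N : ℕ) :
    ∑ i ∈ range (N + 1), ∏ j ∈ range (i + 1), ((G (m ^ j)) ^ k j - 1)
      = (∑ ℓ ∈ Icc 1 m, (PowerSeries.C (R := ZMod m)) ((k 0 - 1 + ℓ).choose (k 0 - 1) : ZMod m) * X ^ ℓ)
        * ∑ i ∈ range (N + 1), G (m ^ (i + 1))
            * ∏ j ∈ Icc 1 i, ∑ ℓ ∈ range m,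
                (PowerSeries.C (R := ZMod m)) (((k j + ℓ).choose (k j) : ZMod m) - 1) * X ^ (ℓ * m ^ j) := by
  rw [Finset.mul_sum]
  exact Finset.sum_congr rfl fun i _ => my_term m hm k hk h0 hj G hG i
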